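/- A fold string S is symmetric if and only if its folding morphism θ_S is palindromic, i.e., τ(θ_S(v)) = θ_S(τ(v)) for every word v over A (equivalently, θ_S(a) is a palindrome). -/

import Mathlib

open scoped Classical

/-- Letters of the folding alphabet {D, U}. -/
inductive FoldLetter : Type
  | D : FoldLetter
  | U : FoldLetter
deriving DecidableEq

/-- Words over {D, U}. -/
abbrev FWord := List FoldLetter

/-- The letter morphism μ swapping D and U. -/
def mir : FoldLetter → FoldLetter
  | .D => .U
  | .U => .D

/-- S̄ = μ(τ(S)): reverse the word and swap D and U. -/
def fbar (S : FWord) : FWord := (S.reverse).map mir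

/-- The folding convolution S * T. -/
def conv (S : FWord) : FWord → FWord
  | [] => S
  | b :: T => S ++ b :: conv (fbar S) T

/-- A fold string: a nonempty word over {D,U} starting with D. -/
def IsFoldString (S : FWord) : Prop := S ≠ [] ∧ S.head? = some FoldLetter.D

/-- The alphabet A = {a,b,c,d}, encoded as ZMod 4 (a = 0, b = 1, c = 2, d = 3),
so that σ is addition of 1 and f is k ↦ i^k. -/
abbrev Alpha := ZMod 4

/-- Words over A. -/
abbrev AWord := List Alpha

/-- w(D) = 1, w(U) = -1. -/
def wInt : FoldLetter → ℤ
  | .D => 1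
  | .U => -1

/-- The homomorphism w on words. -/
def wSum (S : FWord) : ℤ := (S.map wInt).sum

/-- θ_S(a) = e₀ e₁ ⋯ e_{m-1} with e₀ = a and e_i = σ^{w(a₁⋯a_i)}(a). -/
def thetaA (S : FWord) : AWord :=
  (List.range (S.length + 1)).map (fun i => ((wSum (S.take i) : ℤ) : Alpha))

/-- The word operation στ (reverse, then cyclically shift each letter). -/
def st (v : AWord) : AWord := v.reverse.map (· + 1)

/-- θ_S on a letter: θ_S(σ^k(a)) = (στ)^k (θ_S(a)). -/
def thetaL (S : FWord) (e : Alpha) : AWord := st^[e.val] (thetaA S)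

/-- The folding morphism θ_S as a monoid endomorphism of A*. -/
def theta (S : FWord) (v : AWord) : AWord := v.flatMap (thetaL S)

/-- f on letters: f(a) = 1, f(b) = i, f(c) = -1, f(d) = -i. -/
noncomputable def fL : Alpha → ℂ := fun e => Complex.I ^ e.val

/-- The homomorphism f : A* → (ℂ, +). -/
noncomputable def fW (v : AWord) : ℂ := (v.map fL).sum

/-- The k-th point z_k of the curve of a word v. -/
noncomputable def pt (v : AWord) (k : ℕ) : ℂ := fW (v.take k)

/-- The curve of v traverses a segment twice. -/
def TraversesTwice (v : AWord) : Prop :=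
  ∃ k l, k < v.length ∧ l < v.length ∧ k ≠ l ∧
    ({pt v k, pt v (k + 1)} : Set ℂ) = ({pt v l, pt v (l + 1)} : Set ℂ)

/-- The fold string S is self-avoiding. -/
def SelfAvoiding (S : FWord) : Prop :=
  ∀ n : ℕ, 1 ≤ n → ¬ TraversesTwice ((theta S)^[n] [0])

/-- z ∈ ℂ is a Gaussian integer. -/
def IsGaussianInt (z : ℂ) : Prop := ∃ p q : ℤ, z = (p : ℂ) + (q : ℂ) * Complex.I

/-- The number of indices k ∈ {0, …, |v|} with z_k = z (occurrences of z among
the points of the curve of v). -/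
noncomputable def countAt (v : AWord) (z : ℂ) : ℕ :=
  ((Finset.range (v.length + 1)).filter (fun k => pt v k = z)).card

/-- The fold string S is planefilling. -/
def Planefilling (S : FWord) : Prop :=
  ∀ R : ℝ, 0 < R → ∃ n : ℕ, 1 ≤ n ∧ ∃ q : ℂ, IsGaussianInt q ∧
    ∀ z : ℂ, IsGaussianInt z → ‖z - q‖ ≤ R →
      2 ≤ countAt ((theta S)^[n] [0]) z

/-- The word θ_S(abcd), whose curve is the θ-loop of S. -/
def loopWord (S : FWord) : AWord := theta S [0, 1, 2, 3]

/-- The rounding of the closed curve of a word v (all of whose steps are unit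
segments and with f(v) = 0), as a subset of ℂ. -/
noncomputable def roundedCurve (v : AWord) : Set ℂ :=
  ⋃ k ∈ Finset.range v.length,
    (segment ℝ (pt v k + (pt v (k + 1) - pt v k) / 4)
        (pt v (k + 1) - (pt v (k + 1) - pt v k) / 4) ∪
      segment ℝ (pt v (k + 1) - (pt v (k + 1) - pt v k) / 4)
        (pt v ((k + 1) % v.length) +
          (pt v ((k + 1) % v.length + 1) - pt v ((k + 1) % v.length)) / 4))

/-- The number of indices k ∈ {0, …, |v| - 1} with z_k = z (occurrences of z among
the vertices of the closed curve of v). -/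
noncomputable def vertexCount (v : AWord) (z : ℂ) : ℕ :=
  ((Finset.range v.length).filter (fun k => pt v k = z)).card

/-- The closed curve of v is maximally simple: it is simple, and every Gaussian
integer lying in a bounded connected component of the complement of its rounding
occurs exactly twice among its vertices. -/
def MaximallySimple (v : AWord) : Prop :=
  ¬ TraversesTwice v ∧
    ∀ z : ℂ, IsGaussianInt z → z ∉ roundedCurve v →
      Bornology.IsBounded (connectedComponentIn (roundedCurve v)ᶜ z) →
      vertexCount v z = 2

/-- A D-word: letters from {a,c} (even) and {b,d} (odd) alternate. -/
def IsDWord (v : AWord) : Prop :=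
  ∀ k (h : k + 1 < v.length),
    (v[k]'(Nat.lt_of_succ_lt h)).val % 2 ≠ (v[k + 1]'h).val % 2

/-- A loop word: a nonempty D-word with f(v) = 0. -/
def IsLoopWord (v : AWord) : Prop := v ≠ [] ∧ IsDWord v ∧ fW v = 0

/-- The eight square words σᵏ(abcd), σᵏ(adcb), k = 0,1,2,3. -/
def squareWords : List AWord :=
  [[0, 1, 2, 3], [1, 2, 3, 0], [2, 3, 0, 1], [3, 0, 1, 2],
   [0, 3, 2, 1], [1, 0, 3, 2], [2, 1, 0, 3], [3, 2, 1, 0]]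

/-- K[v] ⊆ ℂ: the union of the segments of the curve of v. -/
noncomputable def KSet (v : AWord) : Set ℂ :=
  ⋃ k ∈ Finset.range v.length, segment ℝ (pt v k) (pt v (k + 1))

/-- The number of boundary points of S: Gaussian integers visited exactly once
by the curve of θ_S(a). -/
noncomputable def rCount (S : FWord) : ℕ :=
  ((Finset.range ((thetaA S).length + 1)).filter
    (fun k => countAt (thetaA S) (pt (thetaA S) k) = 1)).card

/-- The k-th point Z_k of the infinite curve of S. -/
noncomputable def Zpt (S : FWord) (k : ℕ) : ℂ := pt ((theta S)^[k] [0]) k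

/-- The fold string S is perfect. -/
def IsPerfectFold (S : FWord) : Prop :=
  SelfAvoiding S ∧
    ∀ p q : ℂ, IsGaussianInt p → IsGaussianInt q → ‖p - q‖ = 1 →
      ∃! jk : Fin 4 × ℕ,
        ({Complex.I ^ (jk.1 : ℕ) * Zpt S jk.2,
          Complex.I ^ (jk.1 : ℕ) * Zpt S (jk.2 + 1)} : Set ℂ) = ({p, q} : Set ℂ)


section FoldAux

lemma wInt_mir (x : FoldLetter) : wInt (mir x) = - wInt x := by cases x <;> rfl

lemma wInt_inj {x y : FoldLetter}
    (h : ((wInt x : ℤ) : Alpha) = ((wInt y : ℤ) : Alpha)) : x = y := by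
  cases x <;> cases y <;> first
    | rfl
    | (exfalso; revert h; push_cast [wInt]; decide)

lemma wSum_append (l l' : FWord) : wSum (l ++ l') = wSum l + wSum l' := by
  simp [wSum]

lemma wSum_reverse (l : FWord) : wSum l.reverse = wSum l := by
  simp [wSum, List.sum_reverse]

lemma wSum_map_mir (l : FWord) : wSum (l.map mir) = - wSum l := by
  induction l with
  | nil => rfl
  | cons x l ih => simp [wSum, wInt_mir] at ih ⊢; omega

lemma fbar_length (S : FWord) : (fbar S).length = S.length := by simp [fbar]

lemma star (S : FWord) {i : ℕ} (hi : i ≤ S.length) :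
    wSum ((fbar S).take (S.length - i)) = wSum (S.take i) - wSum S := by
  have hii : S.length - (S.length - i) = i := by omega
  have h1 : (fbar S).take (S.length - i) = ((S.drop i).map mir).reverse := by
    unfold fbar
    calc (S.reverse.map mir).take (S.length - i)
        = (S.reverse.take (S.length - i)).map mir := by rw [List.map_take]
      _ = ((S.drop (S.length - (S.length - i))).reverse).map mir := by
          rw [List.take_reverse]
      _ = ((S.drop i).reverse).map mir := by rw [hii]
      _ = ((S.drop i).map mir).reverse := by rw [List.map_reverse]
  rw [h1, wSum_reverse, wSum_map_mir]
  have h2 := wSum_append (S.take i) (S.drop i)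
  rw [List.take_append_drop] at h2
  omega

lemma wSum_take_succ (l : FWord) {j : ℕ} (h : j < l.length) :
    wSum (l.take (j + 1)) = wSum (l.take j) + wInt (l[j]'h) := by
  rw [List.take_succ, wSum_append, List.getElem?_eq_getElem h]
  simp [wSum]

lemma rev_map_range {α : Type*} (g : ℕ → α) (n : ℕ) :
    ((List.range (n+1)).map g).reverse = (List.range (n+1)).map (fun i => g (n - i)) := by
  apply List.ext_getElem (by simp)
  intro i h1 h2
  rw [List.getElem_reverse]
  simp only [List.getElem_map, List.getElem_range, List.length_map, List.length_range]
  congr 1 <;> omega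

lemma map_range_pal {α : Type*} (g : ℕ → α) (n : ℕ) :
    ((List.range (n+1)).map g).reverse = (List.range (n+1)).map g ↔
      ∀ i ≤ n, g (n - i) = g i := by
  rw [rev_map_range]
  constructor
  · intro h i hi
    have h1 : i < (List.range (n+1)).length := by simp; omega
    have := congrArg (fun l => l[i]?) h
    simp only [List.getElem?_map, List.getElem?_range (by omega : i < n + 1)] at this
    simpa using this
  · intro h
    apply List.ext_getElem (by simp)
    intro i h1 h2
    simp only [List.getElem_map, List.getElem_range]
    have : i ≤ n := by simp at h1; omega
    exact h i this

lemma thetaA_pal_iff (S : FWord) :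
    (thetaA S).reverse = thetaA S ↔
      ∀ i ≤ S.length,
        ((wSum (S.take (S.length - i)) : ℤ) : Alpha) = ((wSum (S.take i) : ℤ) : Alpha) :=
  map_range_pal _ _

lemma st_pal {w : AWord} (h : w.reverse = w) : (st w).reverse = st w := by
  unfold st
  rw [h, ← List.map_reverse, h]

lemma st_iter_pal {w : AWord} (h : w.reverse = w) (k : ℕ) :
    (st^[k] w).reverse = st^[k] w := by
  induction k with
  | zero => simpa
  | succ k ih => rw [Function.iterate_succ_apply']; exact st_pal ih

lemma thetaL_pal (S : FWord) (h : (thetaA S).reverse = thetaA S) (e : Alpha) :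
    (thetaL S e).reverse = thetaL S e := st_iter_pal h _

end FoldAux

/-- S is symmetric iff θ_S is palindromic. -/
theorem symmetric_iff_palindromic (S : FWord) (hS : IsFoldString S) :
    S = fbar S ↔ ∀ v : AWord, (theta S v).reverse = theta S v.reverse := by
  constructor
  · intro hsym
    have hn : wSum S = 0 := by
      have h0 := star S (i := 0) (Nat.zero_le _)
      rw [Nat.sub_zero, ← hsym, List.take_length, List.take_zero] at h0
      have hz : wSum ([] : FWord) = 0 := rfl
      rw [hz, zero_sub] at h0
      omega
    have hpal : (thetaA S).reverse = thetaA S := by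
      rw [thetaA_pal_iff]
      intro i hi
      have := star S hi
      rw [← hsym, hn] at this
      rw [this]
      ring_nf
    intro v
    induction v with
    | nil => rfl
    | cons e v ih =>
      have h1 : theta S (e :: v) = thetaL S e ++ theta S v := by simp [theta]
      calc (theta S (e :: v)).reverse
          = (theta S v).reverse ++ (thetaL S e).reverse := by rw [h1, List.reverse_append]
        _ = theta S v.reverse ++ thetaL S e := by rw [ih, thetaL_pal S hpal]
        _ = theta S (v.reverse ++ [e]) := by simp [theta]
        _ = theta S (e :: v).reverse := by rw [List.reverse_cons]
  · intro h
    have ht : theta S [0] = thetaA S := by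
      simp [theta, thetaL, show (0 : Alpha).val = 0 from rfl]
    have hpal : (thetaA S).reverse = thetaA S := by
      have h0 := h [0]
      rw [show ([0] : AWord).reverse = [0] from rfl, ht] at h0
      exact h0
    have hmod := (thetaA_pal_iff S).mp hpal
    apply List.ext_getElem (by rw [fbar_length])
    intro j hj h2
    have hj1 : j + 1 ≤ S.length := hj
    have e1 := wSum_take_succ S hj
    have e2 := wSum_take_succ (fbar S) h2
    have s1 := star S (i := S.length - j) (Nat.sub_le _ _)
    have s2 := star S (i := S.length - (j + 1)) (Nat.sub_le _ _)
    rw [Nat.sub_sub_self (le_of_lt hj)] at s1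
    rw [Nat.sub_sub_self hj1] at s2
    have m1 := hmod j (le_of_lt hj)
    have m2 := hmod (j + 1) hj1
    apply wInt_inj
    have d1 : (wInt (S[j]'hj) : ℤ) = wSum (S.take (j + 1)) - wSum (S.take j) := by omega
    have d2 : (wInt ((fbar S)[j]'h2) : ℤ) =
        wSum (S.take (S.length - (j + 1))) - wSum (S.take (S.length - j)) := by omega
    rw [d1, d2]
    push_cast
    rw [m1, m2]
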